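/- Let N = 4L+1 and define u_n(k) = S(3L+n+k)S(3L+n-k) and v_n(k) = sin(2πk/N) u_n(k). Then for -L < n ≤ L and -2L < k < 2L: u_n(k+1) - u_n(k-1) = -4 sin(π(2L+2n)/N) v_{n-1}(k). -/

import Mathlib

open scoped Real BigOperators

/-- `S N k = ∏_{j=1}^{k} 2 sin(π j / N)`, with `S N 0 = 1` (empty product);
note `S N k = 0` for `k ≥ N`. -/
noncomputable def S (N : ℕ) (k : ℕ) : ℝ :=
  ∏ j ∈ Finset.Icc 1 k, 2 * Real.sin (Real.pi * j / N)

/-- The index set `I_N = {-M+1, ..., -M+N}` with `M = ⌊(N+1)/2⌋`.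
For `N = 4L+1` this is `{-2L, ..., 2L}`. -/
noncomputable def Iset (N : ℕ) : Finset ℤ :=
  Finset.Icc (1 - (((N + 1) / 2 : ℕ) : ℤ)) ((N : ℤ) - (((N + 1) / 2 : ℕ) : ℤ))

/-- The centered discrete Fourier transform. -/
noncomputable def dft (N : ℕ) (u : ℤ → ℂ) (l : ℤ) : ℂ :=
  (Real.sqrt N : ℂ)⁻¹ *
    ∑ k ∈ Iset N, Complex.exp (-2 * Real.pi * Complex.I * k * l / N) * u k

/-- The even vectors `u_n(k) = S(3L+n+k) S(3L+n-k)` (for `N = 4L+1`). -/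
noncomputable def uvec (L : ℕ) (n k : ℤ) : ℝ :=
  S (4 * L + 1) (3 * L + n + k).toNat * S (4 * L + 1) (3 * L + n - k).toNat

/-- The odd vectors `v_n(k) = sin(2πk/N) S(3L+n+k) S(3L+n-k)` (for `N = 4L+1`). -/
noncomputable def vvec (L : ℕ) (n k : ℤ) : ℝ :=
  Real.sin (2 * Real.pi * k / (4 * L + 1)) * uvec L n k


lemma sin_key (A B t : ℝ) :
    Real.sin A * Real.sin (A + t) - Real.sin B * Real.sin (B + t) =
      Real.sin (A + B + t) * Real.sin (A - B) := by
  have hA := Real.sin_sq_add_cos_sq A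
  have hB := Real.sin_sq_add_cos_sq B
  rw [Real.sin_add, Real.sin_add, show A + B + t = (A + B) + t by ring,
      Real.sin_add, Real.sin_add, Real.cos_add, Real.sin_sub]
  linear_combination Real.cos t * (Real.sin B ^ 2 * hA - Real.sin A ^ 2 * hB) +
    Real.sin t * (Real.sin B * Real.cos B * hA - Real.sin A * Real.cos A * hB)

lemma Srec (N m : ℕ) : S N (m + 1) = S N m * (2 * Real.sin (Real.pi * (m + 1) / N)) := by
  unfold S
  rw [Finset.prod_Icc_succ_top (by omega : 1 ≤ m + 1)]
  push_cast
  ring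

theorem stmt12 (L : ℕ) (hL : 1 ≤ L) (n : ℤ) (hn1 : -(L : ℤ) < n) (hn2 : n ≤ L)
    (k : ℤ) (hk1 : -(2 * (L : ℤ)) < k) (hk2 : k < 2 * L) :
    uvec L n (k + 1) - uvec L n (k - 1) =
      -4 * Real.sin (Real.pi * (2 * L + 2 * n) / (4 * L + 1)) * vvec L (n - 1) k := by
  have hb : ((3 * (L:ℤ) + n + k - 1).toNat : ℤ) = 3 * (L:ℤ) + n + k - 1 := by omega
  have hc : ((3 * (L:ℤ) + n - k - 1).toNat : ℤ) = 3 * (L:ℤ) + n - k - 1 := by omega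
  set b : ℕ := (3 * (L:ℤ) + n + k - 1).toNat with hbdef
  set c : ℕ := (3 * (L:ℤ) + n - k - 1).toNat with hcdef
  have e1 : (3 * (L:ℤ) + n + (k + 1)).toNat = b + 1 + 1 := by omega
  have e2 : (3 * (L:ℤ) + n - (k + 1)).toNat = c := by omega
  have e3 : (3 * (L:ℤ) + n + (k - 1)).toNat = b := by omega
  have e4 : (3 * (L:ℤ) + n - (k - 1)).toNat = c + 1 + 1 := by omega
  have e5 : (3 * (L:ℤ) + (n - 1) + k).toNat = b := by omega
  have e6 : (3 * (L:ℤ) + (n - 1) - k).toNat = c := by omega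
  have hbR : ((b : ℕ) : ℝ) = 3 * (L:ℝ) + (n:ℝ) + (k:ℝ) - 1 := by exact_mod_cast hb
  have hcR : ((c : ℕ) : ℝ) = 3 * (L:ℝ) + (n:ℝ) - (k:ℝ) - 1 := by exact_mod_cast hc
  have hN0 : (4 * (L:ℝ) + 1) ≠ 0 := by positivity
  set A : ℝ := Real.pi * (3 * (L:ℝ) + (n:ℝ) + (k:ℝ)) / (4 * (L:ℝ) + 1) with hA
  set B : ℝ := Real.pi * (3 * (L:ℝ) + (n:ℝ) - (k:ℝ)) / (4 * (L:ℝ) + 1) with hB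
  set t : ℝ := Real.pi / (4 * (L:ℝ) + 1) with ht
  have r1 : Real.pi * ((b:ℝ) + 1) / ((4 * L + 1 : ℕ) : ℝ) = A := by
    push_cast; rw [hbR]; ring
  have r2 : Real.pi * (((b + 1 : ℕ) : ℝ) + 1) / ((4 * L + 1 : ℕ) : ℝ) = A + t := by
    push_cast; rw [hbR]; ring
  have r3 : Real.pi * ((c:ℝ) + 1) / ((4 * L + 1 : ℕ) : ℝ) = B := by
    push_cast; rw [hcR]; ring
  have r4 : Real.pi * (((c + 1 : ℕ) : ℝ) + 1) / ((4 * L + 1 : ℕ) : ℝ) = B + t := by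
    push_cast; rw [hcR]; ring
  have key : Real.sin A * Real.sin (A + t) - Real.sin B * Real.sin (B + t) =
      -(Real.sin (Real.pi * (2 * (L:ℝ) + 2 * (n:ℝ)) / (4 * (L:ℝ) + 1)) *
        Real.sin (2 * Real.pi * (k:ℝ) / (4 * (L:ℝ) + 1))) := by
    have h1 := sin_key A B t
    have hsum : A + B + t = Real.pi + Real.pi * (2 * (L:ℝ) + 2 * (n:ℝ)) / (4 * (L:ℝ) + 1) := by
      rw [hA, hB, ht]; field_simp; ring
    have hdiff : A - B = 2 * Real.pi * (k:ℝ) / (4 * (L:ℝ) + 1) := by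
      rw [hA, hB]; ring
    have hpi : Real.sin (Real.pi + Real.pi * (2 * (L:ℝ) + 2 * (n:ℝ)) / (4 * (L:ℝ) + 1)) =
        -Real.sin (Real.pi * (2 * (L:ℝ) + 2 * (n:ℝ)) / (4 * (L:ℝ) + 1)) := by
      rw [Real.sin_add]; simp
    rw [hsum, hdiff, hpi] at h1
    linear_combination h1
  unfold uvec vvec uvec
  rw [e1, e2, e3, e4, e5, e6, Srec, Srec, Srec, Srec, r1, r2, r3, r4]
  push_cast
  linear_combination (4 * S (4 * L + 1) b * S (4 * L + 1) c) * key
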